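/- Let f : ℝ² → ℝ be smooth and G-invariant (f(p+nq,q)=f(p,q) for all n ∈ ℤ). For q ≠ 0 and n ≥ 1, define α_n(q) = 2∫_{-1/2}^{1/2} f(uq, q) cos(2nπu) du and β_n(q) = 2∫_{-1/2}^{1/2} f(uq, q) sin(2nπu) du. Then α_n and β_n extend to smooth functions on ℝ that vanish at q = 0 together with all their derivatives. -/

import Mathlib

open Real MeasureTheory intervalIntegral Set

-- Step 1: parametric integral smoothness
lemma paramNat : ∀ (k : ℕ) (g : ℝ × ℝ → ℝ), ContDiff ℝ (⊤ : ℕ∞) g →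
    ∀ a b : ℝ, ContDiff ℝ (k : WithTop ℕ∞) (fun q : ℝ => ∫ u in a..b, g (u, q)) := by
  intro k
  induction k with
  | zero =>
    intro g hg a b
    rw [show ((0:ℕ) : WithTop ℕ∞) = 0 from rfl, contDiff_zero]
    exact continuous_parametric_intervalIntegral_of_continuous'
      (f := fun (q : ℝ) (u : ℝ) => g (u, q))
      (hg.continuous.comp (continuous_snd.prodMk continuous_fst)) a b
  | succ k ih =>
    intro g hg a b
    set g' : ℝ × ℝ → ℝ := fun p => fderiv ℝ g p (0, 1) with hg'def
    have hg' : ContDiff ℝ (⊤ : ℕ∞) g' := by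
      exact (hg.fderiv_right (by exact_mod_cast le_top)).clm_apply contDiff_const
    have key : ∀ q₀ : ℝ, HasDerivAt (fun q : ℝ => ∫ u in a..b, g (u, q))
        (∫ u in a..b, g' (u, q₀)) q₀ := by
      intro q₀
      obtain ⟨M, hM⟩ := ((isCompact_uIcc (a := a) (b := b)).prod
        (isCompact_closedBall q₀ 1)).exists_bound_of_continuousOn hg'.continuous.continuousOn
      have := intervalIntegral.hasDerivAt_integral_of_dominated_loc_of_deriv_le
        (F := fun (q u : ℝ) => g (u, q)) (F' := fun (q u : ℝ) => g' (u, q))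
        (x₀ := q₀) (a := a) (b := b) (μ := volume) (bound := fun _ => M)
        (Metric.ball_mem_nhds q₀ zero_lt_one)
        (Filter.Eventually.of_forall fun x =>
          ((hg.continuous.comp (Continuous.prodMk continuous_id continuous_const)).aestronglyMeasurable))
        ((hg.continuous.comp (Continuous.prodMk continuous_id continuous_const)).intervalIntegrable a b)
        ((hg'.continuous.comp (Continuous.prodMk continuous_id continuous_const)).aestronglyMeasurable)
        (Filter.Eventually.of_forall fun t ht x hx => by
          have : (t, x) ∈ uIcc a b ×ˢ Metric.closedBall q₀ 1 :=
            ⟨uIoc_subset_uIcc ht, Metric.ball_subset_closedBall hx⟩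
          exact hM _ this)
        (intervalIntegrable_const)
        (Filter.Eventually.of_forall fun t ht x hx => by
          have h1 : HasDerivAt (fun q : ℝ => (t, q)) ((0 : ℝ), (1 : ℝ)) x :=
            (hasDerivAt_const x t).prodMk (hasDerivAt_id x)
          exact ((hg.differentiable (by simp) (t, x)).hasFDerivAt).comp_hasDerivAt x h1)
      exact this.2
    rw [show ((k + 1 : ℕ) : WithTop ℕ∞) = (k : WithTop ℕ∞) + 1 by push_cast; rfl]
    refine contDiff_succ_iff_deriv.mpr ⟨fun q => (key q).differentiableAt, by simp, ?_⟩
    have hd : deriv (fun q : ℝ => ∫ u in a..b, g (u, q)) = fun q => ∫ u in a..b, g' (u, q) :=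
      funext fun q => (key q).deriv
    rw [hd]
    exact ih g' hg' a b

lemma itDW {α : ℝ → ℝ} (hα : ContDiff ℝ (⊤ : ℕ∞) α) {s : Set ℝ} (hs : UniqueDiffOn ℝ s)
    (m : ℕ) {x : ℝ} (hx : x ∈ s) : iteratedDerivWithin m α s x = iteratedDeriv m α x := by
  have h1 : HasFTaylorSeriesUpTo (⊤ : ℕ∞) α (ftaylorSeries ℝ α) :=
    (contDiff_iff_ftaylorSeries (n := (⊤ : ℕ∞))).mp hα
  have h2 : HasFTaylorSeriesUpToOn (⊤ : ℕ∞) α (ftaylorSeries ℝ α) s := by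
    rw [← hasFTaylorSeriesUpToOn_univ_iff] at h1
    exact h1.mono (subset_univ s)
  have h3 := h2.eq_iteratedFDerivWithin_of_uniqueDiffOn (m := m) (by exact_mod_cast le_top) hs hx
  rw [iteratedDerivWithin_eq_iteratedFDerivWithin, iteratedDeriv_eq_iteratedFDeriv, ← h3]
  rfl

lemma flatlem {α : ℝ → ℝ} (hα : ContDiff ℝ (⊤ : ℕ∞) α)
    (h : ∀ k : ℕ, ∃ C : ℝ, ∀ q ∈ Icc (0:ℝ) 1, |α q| ≤ C * q ^ k) :
    ∀ i : ℕ, iteratedDeriv i α 0 = 0 := by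
  intro i
  induction i using Nat.strong_induction_on with
  | _ i IH =>
  set c : ℝ := iteratedDeriv i α 0 with hc
  obtain ⟨C, hC⟩ := h (i + 1)
  -- bound on iteratedDeriv (i+1) α on Icc 0 1
  obtain ⟨M, hM⟩ := (isCompact_Icc (a := (0:ℝ)) (b := 1)).exists_bound_of_continuousOn
    ((hα.continuous_iteratedDeriv (i + 1) (by exact_mod_cast le_top)).continuousOn)
  have key : ∀ x ∈ Ioo (0:ℝ) 1, |c| * x ^ i / (Nat.factorial i) ≤ (C + M) * x ^ (i+1) := by
    intro x hx
    have hx0 : (0:ℝ) < x := hx.1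
    have hscd : ContDiffOn ℝ i α (Icc 0 x) := (hα.of_le (by exact_mod_cast le_top)).contDiffOn
    have hud : UniqueDiffOn ℝ (Icc (0:ℝ) x) := uniqueDiffOn_Icc hx0
    have hdiff : DifferentiableOn ℝ (iteratedDerivWithin i α (Icc 0 x)) (Ioo 0 x) := by
      apply DifferentiableOn.congr
        ((contDiff_iff_iteratedDeriv.1 hα).2 i (by exact Ne.lt_top (by simp))).differentiableOn
      intro y hy
      exact itDW hα hud i (Ioo_subset_Icc_self hy)
    obtain ⟨x', hx', heq⟩ := taylor_mean_remainder_lagrange (n := i) hx0.ne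
      (by rwa [uIcc_of_le hx0.le]) (by rwa [uIcc_of_le hx0.le, uIoo_of_le hx0.le])
    rw [uIcc_of_le hx0.le] at heq
    rw [uIoo_of_le hx0.le] at hx'
    -- compute taylor polynomial
    have htay : taylorWithinEval α i (Icc 0 x) 0 x = (Nat.factorial i : ℝ)⁻¹ * x ^ i * c := by
      rw [taylor_within_apply]
      rw [Finset.sum_eq_single i]
      · rw [itDW hα hud i (left_mem_Icc.2 hx0.le), ← hc]
        first
          | (simp [smul_eq_mul]; ring)
          | simp [smul_eq_mul]
          | (simp [smul_eq_mul]; ring_nf)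
      · intro j hj hji
        have hjlt : j < i := lt_of_le_of_ne (Finset.mem_range_succ_iff.mp hj) hji
        rw [itDW hα hud j (left_mem_Icc.2 hx0.le), IH j hjlt]
        simp
      · intro hmem
        exact absurd (Finset.self_mem_range_succ i) hmem
    have hrem : |α x - taylorWithinEval α i (Icc 0 x) 0 x| ≤ M * x ^ (i+1) := by
      rw [heq]
      rw [itDW hα hud (i+1) (Ioo_subset_Icc_self hx')]
      rw [abs_div, abs_mul]
      have h1 : |iteratedDeriv (i+1) α x'| ≤ M := by
        have : x' ∈ Icc (0:ℝ) 1 := ⟨hx'.1.le, le_trans hx'.2.le hx.2.le⟩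
        simpa using hM _ this
      have h2 : |(x - 0) ^ (i+1)| = x ^ (i+1) := by
        rw [sub_zero, abs_pow, abs_of_nonneg hx0.le]
      rw [h2]
      have h3 : (0:ℝ) < (Nat.factorial (i+1) : ℝ) := by positivity
      rw [abs_of_nonneg h3.le]
      have hf1 : (1:ℝ) ≤ (Nat.factorial (i+1) : ℝ) := by
        exact_mod_cast Nat.one_le_iff_ne_zero.mpr (Nat.factorial_ne_zero (i+1))
      have hM0 : (0:ℝ) ≤ M := le_trans (abs_nonneg _) h1
      calc |iteratedDeriv (i+1) α x'| * x ^ (i+1) / (Nat.factorial (i+1) : ℝ)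
          ≤ |iteratedDeriv (i+1) α x'| * x ^ (i+1) := div_le_self (by positivity) hf1
        _ ≤ M * x ^ (i+1) := mul_le_mul_of_nonneg_right h1 (by positivity)
    have hαx : |α x| ≤ C * x ^ (i+1) := hC x ⟨hx0.le, hx.2.le⟩
    have := abs_sub_abs_le_abs_sub (taylorWithinEval α i (Icc 0 x) 0 x) (α x)
    have h4 : |taylorWithinEval α i (Icc 0 x) 0 x| ≤ C * x ^ (i+1) + M * x ^ (i+1) := by
      have h5 : |taylorWithinEval α i (Icc 0 x) 0 x - α x| ≤ M * x ^ (i+1) := by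
        rw [abs_sub_comm]; exact hrem
      calc |taylorWithinEval α i (Icc 0 x) 0 x| ≤ |α x| + |taylorWithinEval α i (Icc 0 x) 0 x - α x| := by
            nlinarith [abs_sub_abs_le_abs_sub (taylorWithinEval α i (Icc 0 x) 0 x) (α x)]
        _ ≤ C * x ^ (i+1) + M * x ^ (i+1) := add_le_add hαx h5
    rw [htay] at h4
    have h6 : |(Nat.factorial i : ℝ)⁻¹ * x ^ i * c| = |c| * x ^ i / (Nat.factorial i) := by
      rw [abs_mul, abs_mul, abs_pow, abs_of_nonneg hx0.le, abs_inv, abs_of_nonneg (by positivity : (0:ℝ) ≤ (Nat.factorial i : ℝ))]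
      ring
    rw [h6] at h4
    linarith [h4]
  -- conclude c = 0
  have hzero : |c| ≤ 0 := by
    have hten : Filter.Tendsto (fun x : ℝ => (C + M) * (Nat.factorial i : ℝ) * x)
        (nhdsWithin 0 (Ioi 0)) (nhds 0) := by
      have hcont : Continuous (fun x : ℝ => (C + M) * (Nat.factorial i : ℝ) * x) :=
        continuous_const.mul continuous_id
      have h0 := hcont.tendsto 0
      simp only [mul_zero] at h0
      exact h0.mono_left nhdsWithin_le_nhds
    apply ge_of_tendsto hten
    filter_upwards [Ioo_mem_nhdsGT_of_mem (by norm_num : (0:ℝ) ∈ Ico (0:ℝ) 1)] with x hx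
    have := key x hx
    have hx0 : (0:ℝ) < x := hx.1
    have hfac : (0:ℝ) < (Nat.factorial i : ℝ) := by positivity
    have hxp : (0:ℝ) < x ^ i := pow_pos hx0 i
    rw [div_le_iff₀ hfac] at this
    -- |c| * x^i ≤ (C+M) * x^(i+1) * i!
    have h7 : |c| * x ^ i ≤ (C + M) * x ^ (i+1) * (Nat.factorial i) := this
    have h9 : |c| * x ^ i ≤ ((C + M) * (Nat.factorial i) * x) * x ^ i := by
      calc |c| * x ^ i ≤ (C + M) * x ^ (i+1) * (Nat.factorial i) := h7
        _ = ((C + M) * (Nat.factorial i) * x) * x ^ i := by rw [pow_succ]; ring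
    exact le_of_mul_le_mul_right h9 hxp
  have := abs_nonneg c
  have : |c| = 0 := le_antisymm hzero (abs_nonneg c)
  exact abs_eq_zero.mp this

noncomputable def Dp (g : ℝ × ℝ → ℝ) : ℝ × ℝ → ℝ := fun p => fderiv ℝ g p (1, 0)

lemma Dp_smooth {g : ℝ × ℝ → ℝ} (hg : ContDiff ℝ (⊤ : ℕ∞) g) : ContDiff ℝ (⊤ : ℕ∞) (Dp g) :=
  (hg.fderiv_right (by exact_mod_cast le_top)).clm_apply contDiff_const

lemma Dp_hasDerivAt {g : ℝ × ℝ → ℝ} (hg : ContDiff ℝ (⊤ : ℕ∞) g) (q s₀ : ℝ) :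
    HasDerivAt (fun s => g (s, q)) (Dp g (s₀, q)) s₀ := by
  have h1 : HasDerivAt (fun s : ℝ => (s, q)) ((1 : ℝ), (0 : ℝ)) s₀ :=
    (hasDerivAt_id s₀).prodMk (hasDerivAt_const s₀ q)
  exact ((hg.differentiable (by simp) (s₀, q)).hasFDerivAt).comp_hasDerivAt s₀ h1

lemma Dp_inv {g : ℝ × ℝ → ℝ} (hg : ContDiff ℝ (⊤ : ℕ∞) g)
    (hinv : ∀ p q : ℝ, g (p + q, q) = g (p, q)) :
    ∀ p q : ℝ, Dp g (p + q, q) = Dp g (p, q) := by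
  intro p q
  have h1 : HasDerivAt (fun s => g (s, q)) (Dp g (p + q, q)) (p + q) := Dp_hasDerivAt hg q (p + q)
  have h2 : HasDerivAt (fun s : ℝ => g (s + q, q)) (Dp g (p + q, q)) p := by
    have hi : HasDerivAt (fun s : ℝ => s + q) 1 p := (hasDerivAt_id p).add_const q
    have := h1.comp p hi
    simpa [Function.comp_def] using this
  have h3 : (fun s : ℝ => g (s + q, q)) = fun s => g (s, q) := funext fun s => hinv s q
  rw [h3] at h2
  exact h2.unique (Dp_hasDerivAt hg q p)

lemma coseq (n : ℕ) (c : ℝ) : Real.cos ((n : ℝ) * π + c) = Real.cos (-((n : ℝ) * π) + c) := by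
  rw [Real.cos_add, Real.cos_add, Real.cos_neg, Real.sin_neg, Real.sin_nat_mul_pi]
  ring

lemma ibp {g : ℝ × ℝ → ℝ} (hg : ContDiff ℝ (⊤ : ℕ∞) g)
    (hinv : ∀ p q : ℝ, g (p + q, q) = g (p, q)) (n : ℕ) (hn : 1 ≤ n) (q c : ℝ) :
    ∫ u in (-(1:ℝ)/2)..(1/2), g (u * q, q) * Real.cos (2 * n * π * u + (c + π/2)) =
      -(q / (2 * n * π)) *
        ∫ u in (-(1:ℝ)/2)..(1/2), Dp g (u * q, q) * Real.cos (2 * n * π * u + c) := by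
  have hnpos : (0:ℝ) < 2 * n * π := by
    have : (1:ℝ) ≤ (n:ℝ) := by exact_mod_cast hn
    nlinarith [Real.pi_pos]
  set ψ₁ : ℝ → ℝ := fun u => Dp g (u * q, q) * Real.cos (2 * n * π * u + c) with hψ₁
  set ψ₂ : ℝ → ℝ := fun u => g (u * q, q) * Real.cos (2 * n * π * u + (c + π/2)) with hψ₂
  have cDp : Continuous (Dp g) := (Dp_smooth hg).continuous
  have cmap : Continuous (fun u : ℝ => ((u * q, q) : ℝ × ℝ)) :=
    (continuous_id.mul continuous_const).prodMk continuous_const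
  have ccos1 : Continuous (fun u : ℝ => Real.cos (2 * n * π * u + c)) :=
    Real.continuous_cos.comp (by continuity)
  have ccos2 : Continuous (fun u : ℝ => Real.cos (2 * n * π * u + (c + π/2))) :=
    Real.continuous_cos.comp (by continuity)
  have cψ₁ : Continuous ψ₁ := (cDp.comp cmap).mul ccos1
  have cψ₂ : Continuous ψ₂ := (hg.continuous.comp cmap).mul ccos2
  -- FTC
  have hderiv : ∀ u ∈ uIcc (-(1:ℝ)/2) (1/2),
      HasDerivAt (fun u => g (u * q, q) * Real.cos (2 * n * π * u + c))
        (q * ψ₁ u + (2 * n * π) * ψ₂ u) u := by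
    intro u _
    have hA : HasDerivAt (fun u : ℝ => g (u * q, q)) (Dp g (u * q, q) * q) u := by
      have hi : HasDerivAt (fun u : ℝ => u * q) q u := hasDerivAt_mul_const q
      simpa [Function.comp_def] using (Dp_hasDerivAt hg q (u * q)).comp u hi
    have hB : HasDerivAt (fun u : ℝ => Real.cos (2 * n * π * u + c))
        (2 * n * π * Real.cos (2 * n * π * u + (c + π/2))) u := by
      have hi : HasDerivAt (fun u : ℝ => 2 * n * π * u + c) (2 * n * π) u := by
        simpa using ((hasDerivAt_id u).const_mul (2 * (n:ℝ) * π)).add_const c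
      have h2 := (Real.hasDerivAt_cos (2 * n * π * u + c)).comp u hi
      refine h2.congr_deriv ?_
      rw [show 2 * (n:ℝ) * π * u + (c + π/2) = (2 * (n:ℝ) * π * u + c) + π/2 by ring,
        Real.cos_add_pi_div_two]
      ring
    have := hA.mul hB
    refine this.congr_deriv ?_
    simp only [hψ₁, hψ₂]
    ring
  have hintφ : IntervalIntegrable (fun u => q * ψ₁ u + (2 * n * π) * ψ₂ u) volume
      (-(1:ℝ)/2) (1/2) :=
    ((continuous_const.mul cψ₁).add (continuous_const.mul cψ₂)).intervalIntegrable _ _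
  have hFTC := intervalIntegral.integral_eq_sub_of_hasDerivAt hderiv hintφ
  -- boundary term is zero
  have hbdry : g ((1:ℝ)/2 * q, q) * Real.cos (2 * n * π * (1/2) + c) -
      g (-(1:ℝ)/2 * q, q) * Real.cos (2 * n * π * (-1/2) + c) = 0 := by
    have e1 : 2 * (n:ℝ) * π * (1/2) + c = (n:ℝ) * π + c := by ring
    have e2 : 2 * (n:ℝ) * π * (-1/2) + c = -((n:ℝ) * π) + c := by ring
    have e3 : (1:ℝ)/2 * q = -(1:ℝ)/2 * q + q := by ring
    rw [e1, e2, e3, hinv, ← coseq n c]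
    ring
  rw [hbdry] at hFTC
  -- split the integral
  have hsplit : ∫ u in (-(1:ℝ)/2)..(1/2), (q * ψ₁ u + (2 * n * π) * ψ₂ u) =
      q * (∫ u in (-(1:ℝ)/2)..(1/2), ψ₁ u) + (2 * n * π) * ∫ u in (-(1:ℝ)/2)..(1/2), ψ₂ u := by
    rw [intervalIntegral.integral_add (f := fun u => q * ψ₁ u) (g := fun u => (2 * n * π) * ψ₂ u)
      ((continuous_const.mul cψ₁ : Continuous fun u => q * ψ₁ u).intervalIntegrable _ _)
      ((continuous_const.mul cψ₂ : Continuous fun u => (2 * n * π) * ψ₂ u).intervalIntegrable _ _),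
      intervalIntegral.integral_const_mul, intervalIntegral.integral_const_mul]
  rw [hsplit] at hFTC
  have hne : (2 * (n:ℝ) * π) ≠ 0 := ne_of_gt hnpos
  field_simp
  linarith [hFTC]

lemma decay (n : ℕ) (hn : 1 ≤ n) :
    ∀ (k : ℕ) (g : ℝ × ℝ → ℝ), ContDiff ℝ (⊤ : ℕ∞) g →
      (∀ p q : ℝ, g (p + q, q) = g (p, q)) →
    ∀ c : ℝ, ∃ C : ℝ, ∀ q : ℝ, |q| ≤ 1 →
      |∫ u in (-(1:ℝ)/2)..(1/2), g (u * q, q) * Real.cos (2 * n * π * u + c)| ≤ C * |q| ^ k := by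
  intro k
  induction k with
  | zero =>
    intro g hg hinv c
    obtain ⟨M, hM⟩ := ((isCompact_Icc (a := -(1:ℝ)/2) (b := 1/2)).prod
      (isCompact_Icc (a := (-1:ℝ)) (b := 1))).exists_bound_of_continuousOn
      hg.continuous.continuousOn
    refine ⟨M, fun q hq => ?_⟩
    have hbound : ∀ u ∈ Set.uIoc (-(1:ℝ)/2) (1/2), ‖g (u * q, q) * Real.cos (2 * n * π * u + c)‖ ≤ M := by
      intro u hu
      have hu' : u ∈ Ioc (-(1:ℝ)/2) (1/2) := by
        rwa [uIoc_of_le (by norm_num : (-(1:ℝ)/2) ≤ 1/2)] at hu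
      have h1 : |u| ≤ 1/2 := abs_le.2 ⟨by linarith [hu'.1], hu'.2⟩
      have h2 : |u * q| ≤ 1/2 := by
        rw [abs_mul]
        calc |u| * |q| ≤ (1/2) * 1 := mul_le_mul h1 hq (abs_nonneg q) (by norm_num)
          _ = 1/2 := by norm_num
      have hmem : ((u * q, q) : ℝ × ℝ) ∈ Icc (-(1:ℝ)/2) (1/2) ×ˢ Icc (-1:ℝ) 1 := by
        rw [mem_prod, mem_Icc, mem_Icc]
        refine ⟨⟨by linarith [(abs_le.1 h2).1], (abs_le.1 h2).2⟩,
          ⟨by linarith [(abs_le.1 hq).1], (abs_le.1 hq).2⟩⟩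
      have h3 := hM _ hmem
      rw [norm_mul]
      have h4 : ‖Real.cos (2 * n * π * u + c)‖ ≤ 1 := by
        rw [Real.norm_eq_abs]; exact Real.abs_cos_le_one _
      have h5 : (0:ℝ) ≤ M := le_trans (norm_nonneg _) h3
      nlinarith [norm_nonneg (g (u * q, q)), norm_nonneg (Real.cos (2 * (n:ℝ) * π * u + c))]
    have h6 := intervalIntegral.norm_integral_le_of_norm_le_const hbound
    rw [Real.norm_eq_abs] at h6
    have h7 : |(1:ℝ)/2 - (-(1:ℝ)/2)| = 1 := by norm_num
    rw [h7, mul_one] at h6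
    simpa using h6
  | succ k ih =>
    intro g hg hinv c
    obtain ⟨C, hC⟩ := ih (Dp g) (Dp_smooth hg) (Dp_inv hg hinv) (c - π/2)
    refine ⟨C / (2 * n * π), fun q hq => ?_⟩
    have hnpos : (0:ℝ) < 2 * n * π := by
      have : (1:ℝ) ≤ (n:ℝ) := by exact_mod_cast hn
      nlinarith [Real.pi_pos]
    have hphase : ∀ u : ℝ, 2 * (n:ℝ) * π * u + c = 2 * (n:ℝ) * π * u + ((c - π/2) + π/2) :=
      fun u => by ring
    have hibp := ibp hg hinv n hn q (c - π/2)
    have heq : ∫ u in (-(1:ℝ)/2)..(1/2), g (u * q, q) * Real.cos (2 * n * π * u + c) =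
        -(q / (2 * n * π)) *
          ∫ u in (-(1:ℝ)/2)..(1/2), Dp g (u * q, q) * Real.cos (2 * n * π * u + (c - π/2)) := by
      rw [← hibp]
      congr 1
      ext u
      rw [hphase u]
    rw [heq, abs_mul]
    have h1 : |(-(q / (2 * n * π)))| = |q| / (2 * n * π) := by
      rw [abs_neg, abs_div]
      congr 1
      exact abs_of_pos hnpos
    rw [h1]
    have h2 := hC q hq
    calc |q| / (2 * n * π) *
          |∫ u in (-(1:ℝ)/2)..(1/2), Dp g (u * q, q) * Real.cos (2 * n * π * u + (c - π/2))|
        ≤ |q| / (2 * n * π) * (C * |q| ^ k) := by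
          apply mul_le_mul_of_nonneg_left h2 (by positivity)
      _ = C / (2 * n * π) * |q| ^ (k + 1) := by
          rw [pow_succ]; field_simp

theorem stmt4 (f : ℝ × ℝ → ℝ) (hf : ContDiff ℝ (⊤ : ℕ∞) f)
    (hinv : ∀ (n : ℤ) (p q : ℝ), f (p + n * q, q) = f (p, q))
    (n : ℕ) (hn : 1 ≤ n)
    (α β : ℝ → ℝ)
    (hα : ∀ q : ℝ, α q =
      2 * ∫ u in (-(1:ℝ)/2)..(1/2), f (u * q, q) * Real.cos (2 * n * π * u))
    (hβ : ∀ q : ℝ, β q =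
      2 * ∫ u in (-(1:ℝ)/2)..(1/2), f (u * q, q) * Real.sin (2 * n * π * u)) :
    ContDiff ℝ (⊤ : ℕ∞) α ∧ ContDiff ℝ (⊤ : ℕ∞) β ∧
      (∀ i : ℕ, iteratedDeriv i α 0 = 0) ∧ (∀ i : ℕ, iteratedDeriv i β 0 = 0) := by
  have hinv1 : ∀ p q : ℝ, f (p + q, q) = f (p, q) := fun p q => by simpa using hinv 1 p q
  have hmap : ContDiff ℝ (⊤ : ℕ∞) (fun x : ℝ × ℝ => f (x.1 * x.2, x.2)) :=
    hf.comp ((contDiff_fst.mul contDiff_snd).prodMk contDiff_snd)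
  have hgc : ContDiff ℝ (⊤ : ℕ∞)
      (fun x : ℝ × ℝ => f (x.1 * x.2, x.2) * Real.cos (2 * n * π * x.1)) :=
    hmap.mul (Real.contDiff_cos.comp (contDiff_const.mul contDiff_fst))
  have hgs : ContDiff ℝ (⊤ : ℕ∞)
      (fun x : ℝ × ℝ => f (x.1 * x.2, x.2) * Real.sin (2 * n * π * x.1)) :=
    hmap.mul (Real.contDiff_sin.comp (contDiff_const.mul contDiff_fst))
  -- smoothness
  have smooth_int : ∀ g : ℝ × ℝ → ℝ, ContDiff ℝ (⊤ : ℕ∞) g →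
      ContDiff ℝ (⊤ : ℕ∞) (fun q : ℝ => 2 * ∫ u in (-(1:ℝ)/2)..(1/2), g (u, q)) := by
    intro g hg
    apply ContDiff.mul contDiff_const
    rw [show (((⊤ : ℕ∞) : WithTop ℕ∞)) = (⊤ : ℕ∞) from rfl]
    refine contDiff_infty.mpr fun k => ?_
    exact paramNat k g hg _ _
  have hαs : ContDiff ℝ (⊤ : ℕ∞) α := by
    have hfun : α = fun q : ℝ =>
        2 * ∫ u in (-(1:ℝ)/2)..(1/2),
          (fun x : ℝ × ℝ => f (x.1 * x.2, x.2) * Real.cos (2 * n * π * x.1)) (u, q) :=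
      funext hα
    rw [hfun]
    exact smooth_int _ hgc
  have hβs : ContDiff ℝ (⊤ : ℕ∞) β := by
    have hfun : β = fun q : ℝ =>
        2 * ∫ u in (-(1:ℝ)/2)..(1/2),
          (fun x : ℝ × ℝ => f (x.1 * x.2, x.2) * Real.sin (2 * n * π * x.1)) (u, q) :=
      funext hβ
    rw [hfun]
    exact smooth_int _ hgs
  -- decay bounds
  have hαflat : ∀ i : ℕ, iteratedDeriv i α 0 = 0 := by
    apply flatlem hαs
    intro k
    obtain ⟨C, hC⟩ := decay n hn k f hf hinv1 0
    refine ⟨2 * C, fun q hq => ?_⟩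
    have hq1 : |q| ≤ 1 := by
      rw [abs_of_nonneg hq.1]; exact hq.2
    have h1 := hC q hq1
    simp only [add_zero] at h1
    rw [hα q, abs_mul]
    have h2 : |(2:ℝ)| = 2 := by norm_num
    rw [h2]
    calc 2 * |∫ u in (-(1:ℝ)/2)..(1/2), f (u * q, q) * Real.cos (2 * n * π * u)|
        ≤ 2 * (C * |q| ^ k) := by linarith [h1]
      _ = 2 * C * q ^ k := by rw [abs_of_nonneg hq.1]; ring
  have hβflat : ∀ i : ℕ, iteratedDeriv i β 0 = 0 := by
    apply flatlem hβs
    intro k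
    obtain ⟨C, hC⟩ := decay n hn k f hf hinv1 (-(π/2))
    refine ⟨2 * C, fun q hq => ?_⟩
    have hq1 : |q| ≤ 1 := by
      rw [abs_of_nonneg hq.1]; exact hq.2
    have h1 := hC q hq1
    have hre : ∀ u : ℝ, Real.cos (2 * (n:ℝ) * π * u + -(π/2)) = Real.sin (2 * (n:ℝ) * π * u) :=
      fun u => by rw [← Real.cos_sub_pi_div_two]; ring_nf
    simp only [hre] at h1
    rw [hβ q, abs_mul]
    have h2 : |(2:ℝ)| = 2 := by norm_num
    rw [h2]
    calc 2 * |∫ u in (-(1:ℝ)/2)..(1/2), f (u * q, q) * Real.sin (2 * n * π * u)|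
        ≤ 2 * (C * |q| ^ k) := by linarith [h1]
      _ = 2 * C * q ^ k := by rw [abs_of_nonneg hq.1]; ring
  exact ⟨hαs, hβs, hαflat, hβflat⟩
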